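/- Let Ω = M × (−h,0) with M = (0,1)², and ṽ ∈ H¹(Ω) with ∫_Ω |ṽ|⁴|∇_H ṽ|² < ∞. Then (∫_M (∫_{−h}^0 |ṽ|⁶ dz)² dxdy)^{1/2} ≤ C ‖ṽ‖_{L⁶(Ω)}³ (∫_Ω |ṽ|⁴ |∇_H ṽ|² dxdydz)^{1/2} + ‖ṽ‖_{L⁶(Ω)}⁶. -/

import Mathlib

open MeasureTheory Real
open Set


private lemma contIntOn {f : ℝ → ℝ} (hf : Continuous f) (a b : ℝ) :
    IntegrableOn f (Set.Ioo a b) :=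
  (hf.integrableOn_Icc).mono_set Set.Ioo_subset_Icc_self

private lemma contParam {X : Type*} [TopologicalSpace X] [LocallyCompactSpace X] [FirstCountableTopology X]
    {k : X → ℝ → ℝ} (hk : Continuous fun p : X × ℝ => k p.1 p.2) (a b : ℝ) :
    Continuous fun x => ∫ y in Set.Ioo a b, k x y := by
  rw [continuous_iff_continuousAt]
  intro x₀
  obtain ⟨K, hKc, hKn⟩ := exists_compact_mem_nhds x₀
  have hcomp : IsCompact (K ×ˢ Set.Icc a b) := hKc.prod isCompact_Icc
  obtain ⟨M, hM⟩ := hcomp.exists_bound_of_continuousOn hk.continuousOn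
  apply MeasureTheory.continuousAt_of_dominated (bound := fun _ => M)
  · filter_upwards with x
    exact ((hk.comp (continuous_const.prodMk continuous_id)).aestronglyMeasurable)
  · filter_upwards [hKn] with x hx
    filter_upwards [ae_restrict_mem measurableSet_Ioo] with y hy
    exact hM (x, y) ⟨hx, Set.Ioo_subset_Icc_self hy⟩
  · exact integrableOn_const measure_Ioo_lt_top.ne enorm_ne_top
  · filter_upwards with y
    exact (hk.comp (continuous_id.prodMk continuous_const)).continuousAt

private lemma swap2 {m : ℝ → ℝ → ℝ} (hm : Continuous fun p : ℝ × ℝ => m p.1 p.2)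
    (a b c d : ℝ) :
    ∫ x in Set.Ioo a b, ∫ y in Set.Ioo c d, m x y
      = ∫ y in Set.Ioo c d, ∫ x in Set.Ioo a b, m x y := by
  have hint : Integrable (Function.uncurry m)
      ((volume.restrict (Set.Ioo a b)).prod (volume.restrict (Set.Ioo c d))) := by
    rw [Measure.prod_restrict]
    exact (ContinuousOn.integrableOn_compact (isCompact_Icc.prod isCompact_Icc)
        hm.continuousOn).mono_set
      (Set.prod_mono Set.Ioo_subset_Icc_self Set.Ioo_subset_Icc_self)
  exact MeasureTheory.integral_integral_swap hint

private lemma sqrt_mul_le_add {x y : ℝ} (hx : 0 ≤ x) (hy : 0 ≤ y) :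
    Real.sqrt x * Real.sqrt y ≤ (x + y) / 2 := by
  rw [← Real.sqrt_mul hx]
  calc Real.sqrt (x * y) ≤ Real.sqrt (((x + y) / 2) ^ 2) :=
        Real.sqrt_le_sqrt (by nlinarith [sq_nonneg (x - y)])
    _ = (x + y) / 2 := Real.sqrt_sq (by positivity)

private lemma cs_Ioo {f g : ℝ → ℝ} (hf : Continuous f) (hg : Continuous g)
    (hf0 : ∀ x, 0 ≤ f x) (hg0 : ∀ x, 0 ≤ g x) (a b : ℝ) :
    ∫ x in Set.Ioo a b, Real.sqrt (f x) * Real.sqrt (g x)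
      ≤ Real.sqrt (∫ x in Set.Ioo a b, f x) * Real.sqrt (∫ x in Set.Ioo a b, g x) := by
  set A := ∫ x in Set.Ioo a b, f x with hA
  set B := ∫ x in Set.Ioo a b, g x with hB
  have hA0 : 0 ≤ A := integral_nonneg (fun x => hf0 x)
  have hB0 : 0 ≤ B := integral_nonneg (fun x => hg0 x)
  rcases eq_or_lt_of_le hA0 with hA0' | hA0'
  · have hf_ae : f =ᵐ[volume.restrict (Set.Ioo a b)] 0 :=
      (integral_eq_zero_iff_of_nonneg (fun x => hf0 x) (contIntOn hf a b)).1 hA0'.symm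
    have : (fun x => Real.sqrt (f x) * Real.sqrt (g x))
        =ᵐ[volume.restrict (Set.Ioo a b)] 0 := by
      filter_upwards [hf_ae] with x hx
      simp [hx]
    rw [integral_congr_ae this]
    simp [← hA0']
  rcases eq_or_lt_of_le hB0 with hB0' | hB0'
  · have hg_ae : g =ᵐ[volume.restrict (Set.Ioo a b)] 0 :=
      (integral_eq_zero_iff_of_nonneg (fun x => hg0 x) (contIntOn hg a b)).1 hB0'.symm
    have : (fun x => Real.sqrt (f x) * Real.sqrt (g x))
        =ᵐ[volume.restrict (Set.Ioo a b)] 0 := by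
      filter_upwards [hg_ae] with x hx
      simp [hx]
    rw [integral_congr_ae this]
    simp [← hB0']
  · set t := Real.sqrt B / Real.sqrt A with ht
    have hAs : 0 < Real.sqrt A := Real.sqrt_pos.2 hA0'
    have hBs : 0 < Real.sqrt B := Real.sqrt_pos.2 hB0'
    have ht0 : 0 < t := by positivity
    have hpt : ∀ x, Real.sqrt (f x) * Real.sqrt (g x) ≤ (t * f x + g x / t) / 2 := by
      intro x
      have h1 : Real.sqrt (t * f x) * Real.sqrt (g x / t)
          = Real.sqrt (f x) * Real.sqrt (g x) := by
        rw [Real.sqrt_mul ht0.le, Real.sqrt_div' (g x) ht0.le]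
        field_simp
      rw [← h1]
      exact sqrt_mul_le_add (mul_nonneg ht0.le (hf0 x)) (div_nonneg (hg0 x) ht0.le)
    calc ∫ x in Set.Ioo a b, Real.sqrt (f x) * Real.sqrt (g x)
        ≤ ∫ x in Set.Ioo a b, (t * f x + g x / t) / 2 := by
          apply integral_mono (contIntOn (by continuity) a b) (contIntOn (by continuity) a b) hpt
      _ = (t * A + B / t) / 2 := by
          rw [integral_div, integral_add (by exact (contIntOn hf a b).const_mul t)
            ((contIntOn hg a b).div_const t), integral_const_mul, integral_div]
      _ = Real.sqrt A * Real.sqrt B := by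
          rw [ht]
          have h2 : Real.sqrt A ^ 2 = A := Real.sq_sqrt hA0
          have h3 : Real.sqrt B ^ 2 = B := Real.sq_sqrt hB0
          field_simp
          nlinarith [h2, h3, sq_nonneg (Real.sqrt A * Real.sqrt B)]

private lemma cont_I2 {L : ℝ → ℝ → ℝ → ℝ}
    (hL : Continuous fun pt : ℝ × ℝ × ℝ => L pt.1 pt.2.1 pt.2.2) (c d : ℝ) :
    Continuous fun xy : ℝ × ℝ => ∫ z in Set.Ioo c d, L xy.1 xy.2 z :=
  contParam (k := fun (xy : ℝ × ℝ) z => L xy.1 xy.2 z)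
    (hL.comp (show Continuous fun p : (ℝ × ℝ) × ℝ => ((p.1.1, p.1.2, p.2) : ℝ × ℝ × ℝ) by fun_prop)) c d

private lemma cont_I1 {L : ℝ → ℝ → ℝ → ℝ}
    (hL : Continuous fun pt : ℝ × ℝ × ℝ => L pt.1 pt.2.1 pt.2.2) (a b c d : ℝ) :
    Continuous fun x : ℝ => ∫ y in Set.Ioo a b, ∫ z in Set.Ioo c d, L x y z :=
  contParam (k := fun x y => ∫ z in Set.Ioo c d, L x y z) (cont_I2 hL c d) a b

/-- swap the two outer integrals of a triple iterated integral -/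
private lemma swap_xy {L : ℝ → ℝ → ℝ → ℝ}
    (hL : Continuous fun pt : ℝ × ℝ × ℝ => L pt.1 pt.2.1 pt.2.2) (a b a' b' c d : ℝ) :
    ∫ x in Set.Ioo a b, ∫ y in Set.Ioo a' b', ∫ z in Set.Ioo c d, L x y z
      = ∫ y in Set.Ioo a' b', ∫ x in Set.Ioo a b, ∫ z in Set.Ioo c d, L x y z :=
  swap2 (m := fun x y => ∫ z in Set.Ioo c d, L x y z) (cont_I2 hL c d) a b a' b'

private lemma I0_mono {L₁ L₂ : ℝ → ℝ → ℝ → ℝ}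
    (h₁ : Continuous fun pt : ℝ × ℝ × ℝ => L₁ pt.1 pt.2.1 pt.2.2)
    (h₂ : Continuous fun pt : ℝ × ℝ × ℝ => L₂ pt.1 pt.2.1 pt.2.2)
    (hle : ∀ x y z, L₁ x y z ≤ L₂ x y z) (a b a' b' c d : ℝ) :
    ∫ x in Set.Ioo a b, ∫ y in Set.Ioo a' b', ∫ z in Set.Ioo c d, L₁ x y z
      ≤ ∫ x in Set.Ioo a b, ∫ y in Set.Ioo a' b', ∫ z in Set.Ioo c d, L₂ x y z := by
  apply integral_mono (contIntOn (cont_I1 h₁ a' b' c d) a b)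
    (contIntOn (cont_I1 h₂ a' b' c d) a b)
  intro x
  apply integral_mono (contIntOn ((cont_I2 h₁ c d).comp (by fun_prop : Continuous fun y : ℝ => ((x, y) : ℝ × ℝ))) a' b')
    (contIntOn ((cont_I2 h₂ c d).comp (by fun_prop : Continuous fun y : ℝ => ((x, y) : ℝ × ℝ))) a' b')
  intro y
  exact integral_mono (contIntOn (by fun_prop) c d) (contIntOn (by fun_prop) c d)
    (fun z => hle x y z)

private lemma I0_nonneg {L : ℝ → ℝ → ℝ → ℝ} (h0 : ∀ x y z, 0 ≤ L x y z)
    (a b a' b' c d : ℝ) :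
    0 ≤ ∫ x in Set.Ioo a b, ∫ y in Set.Ioo a' b', ∫ z in Set.Ioo c d, L x y z :=
  integral_nonneg fun x => integral_nonneg fun y => integral_nonneg fun z => h0 x y z

private lemma claim1 {w p : ℝ → ℝ → ℝ → ℝ}
    (hw : Continuous fun pt : ℝ × ℝ × ℝ => w pt.1 pt.2.1 pt.2.2)
    (hp : Continuous fun pt : ℝ × ℝ × ℝ => p pt.1 pt.2.1 pt.2.2)
    (hd : ∀ y z t, HasDerivAt (fun s => w s y z) (p t y z) t)
    (c d : ℝ) {x : ℝ} (hx : x ∈ Set.Ioo (0:ℝ) 1) (y : ℝ) :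
    (∫ z in Set.Ioo c d, w x y z)
      ≤ (∫ s in Set.Ioo (0:ℝ) 1, ∫ z in Set.Ioo c d, w s y z)
        + ∫ z in Set.Ioo c d, ∫ t in Set.Ioo (0:ℝ) 1, |p t y z| := by
  set D : ℝ := ∫ z in Set.Ioo c d, ∫ t in Set.Ioo (0:ℝ) 1, |p t y z| with hD
  have hDc : Continuous fun z : ℝ => ∫ t in Set.Ioo (0:ℝ) 1, |p t y z| := by
    apply contParam (k := fun z t => |p t y z|)
    exact (hp.comp (show Continuous fun pr : ℝ × ℝ => ((pr.2, y, pr.1) : ℝ × ℝ × ℝ) by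
      fun_prop)).abs
  have key : ∀ s ∈ Set.Ioo (0:ℝ) 1,
      (∫ z in Set.Ioo c d, w x y z) ≤ (∫ z in Set.Ioo c d, w s y z) + D := by
    intro s hs
    have h2 : ∀ z, w x y z ≤ w s y z + ∫ t in Set.Ioo (0:ℝ) 1, |p t y z| := by
      intro z
      have hftc : ∫ t in s..x, p t y z = w x y z - w s y z := by
        apply intervalIntegral.integral_eq_sub_of_hasDerivAt (fun t _ => hd y z t)
        exact ((hp.comp (show Continuous fun t : ℝ => ((t, y, z) : ℝ × ℝ × ℝ) by
          fun_prop)).intervalIntegrable s x)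
      have hb : |∫ t in s..x, p t y z| ≤ ∫ t in Set.Ioo (0:ℝ) 1, |p t y z| := by
        have h3 : |∫ t in s..x, p t y z| ≤ ∫ t in Set.uIoc s x, |p t y z| := by
          simpa [Real.norm_eq_abs] using
            intervalIntegral.norm_integral_le_integral_norm_uIoc
              (f := fun t => p t y z) (a := s) (b := x) (μ := volume)
        refine h3.trans (setIntegral_mono_set
          (contIntOn ((hp.comp (show Continuous fun t : ℝ => ((t, y, z) : ℝ × ℝ × ℝ) by
            fun_prop)).abs) 0 1)
          (Filter.Eventually.of_forall fun t => abs_nonneg _)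
          (HasSubset.Subset.eventuallyLE ?_))
        intro t ht
        rcases ht with ⟨ht1, ht2⟩
        constructor
        · exact lt_of_le_of_lt (le_min hs.1.le hx.1.le) ht1
        · exact lt_of_le_of_lt ht2 (max_lt hs.2 hx.2)
      have : w x y z - w s y z ≤ ∫ t in Set.Ioo (0:ℝ) 1, |p t y z| := by
        rw [← hftc]
        exact (le_abs_self _).trans hb
      linarith
    calc (∫ z in Set.Ioo c d, w x y z)
        ≤ ∫ z in Set.Ioo c d, (w s y z + ∫ t in Set.Ioo (0:ℝ) 1, |p t y z|) := by
          apply integral_mono (contIntOn (by fun_prop) c d) _ h2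
          exact (contIntOn ((hw.comp (show Continuous fun z : ℝ => ((s, y, z) : ℝ × ℝ × ℝ) by
            fun_prop)).add hDc) c d)
      _ = (∫ z in Set.Ioo c d, w s y z) + D := by
          rw [integral_add (contIntOn (by fun_prop) c d) (contIntOn hDc c d)]
  have hvol : (volume (Set.Ioo (0:ℝ) 1)).toReal = 1 := by
    simp [Real.volume_Ioo]
  have hconst : (∫ z in Set.Ioo c d, w x y z)
      = ∫ s in Set.Ioo (0:ℝ) 1, (∫ z in Set.Ioo c d, w x y z) := by
    rw [setIntegral_const, measureReal_def, hvol, one_smul]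
  rw [hconst]
  have hgc : Continuous fun s : ℝ => ∫ z in Set.Ioo c d, w s y z :=
    (cont_I2 hw c d).comp (show Continuous fun s : ℝ => ((s, y) : ℝ × ℝ) by fun_prop)
  calc ∫ s in Set.Ioo (0:ℝ) 1, (∫ z in Set.Ioo c d, w x y z)
      ≤ ∫ s in Set.Ioo (0:ℝ) 1, ((∫ z in Set.Ioo c d, w s y z) + D) := by
        apply setIntegral_mono_on (integrableOn_const measure_Ioo_lt_top.ne enorm_ne_top)
          (contIntOn (hgc.add continuous_const) 0 1) measurableSet_Ioo
        exact key
    _ = (∫ s in Set.Ioo (0:ℝ) 1, ∫ z in Set.Ioo c d, w s y z) + D := by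
        rw [integral_add (contIntOn hgc 0 1) (integrableOn_const measure_Ioo_lt_top.ne enorm_ne_top),
          setIntegral_const, measureReal_def, hvol, one_smul]

private lemma cs_chain {p f g : ℝ → ℝ → ℝ → ℝ}
    (hp : Continuous fun pt : ℝ × ℝ × ℝ => p pt.1 pt.2.1 pt.2.2)
    (hf : Continuous fun pt : ℝ × ℝ × ℝ => f pt.1 pt.2.1 pt.2.2)
    (hg : Continuous fun pt : ℝ × ℝ × ℝ => g pt.1 pt.2.1 pt.2.2)
    (hf0 : ∀ x y z, 0 ≤ f x y z) (hg0 : ∀ x y z, 0 ≤ g x y z)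
    (hpt : ∀ x y z, |p x y z| ≤ 6 * (Real.sqrt (f x y z) * Real.sqrt (g x y z)))
    (a b a' b' c d : ℝ) :
    ∫ x in Set.Ioo a b, ∫ y in Set.Ioo a' b', ∫ z in Set.Ioo c d, |p x y z|
      ≤ 6 * (Real.sqrt (∫ x in Set.Ioo a b, ∫ y in Set.Ioo a' b', ∫ z in Set.Ioo c d, f x y z)
          * Real.sqrt (∫ x in Set.Ioo a b, ∫ y in Set.Ioo a' b', ∫ z in Set.Ioo c d, g x y z)) := by
  have hpabs : Continuous fun pt : ℝ × ℝ × ℝ => |p pt.1 pt.2.1 pt.2.2| := hp.abs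
  have hfxy : ∀ x y, Continuous fun z => f x y z := fun x y =>
    hf.comp (show Continuous fun z : ℝ => ((x, y, z) : ℝ × ℝ × ℝ) by fun_prop)
  have hgxy : ∀ x y, Continuous fun z => g x y z := fun x y =>
    hg.comp (show Continuous fun z : ℝ => ((x, y, z) : ℝ × ℝ × ℝ) by fun_prop)
  have hF2 : ∀ x, Continuous fun y => ∫ z in Set.Ioo c d, f x y z := fun x =>
    (cont_I2 hf c d).comp (show Continuous fun y : ℝ => ((x, y) : ℝ × ℝ) by fun_prop)
  have hG2 : ∀ x, Continuous fun y => ∫ z in Set.Ioo c d, g x y z := fun x =>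
    (cont_I2 hg c d).comp (show Continuous fun y : ℝ => ((x, y) : ℝ × ℝ) by fun_prop)
  have hF20 : ∀ x y, 0 ≤ ∫ z in Set.Ioo c d, f x y z := fun x y =>
    integral_nonneg fun z => hf0 x y z
  have hG20 : ∀ x y, 0 ≤ ∫ z in Set.Ioo c d, g x y z := fun x y =>
    integral_nonneg fun z => hg0 x y z
  have step1 : ∀ x y, (∫ z in Set.Ioo c d, |p x y z|)
      ≤ 6 * (Real.sqrt (∫ z in Set.Ioo c d, f x y z)
          * Real.sqrt (∫ z in Set.Ioo c d, g x y z)) := by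
    intro x y
    calc (∫ z in Set.Ioo c d, |p x y z|)
        ≤ ∫ z in Set.Ioo c d, 6 * (Real.sqrt (f x y z) * Real.sqrt (g x y z)) := by
          apply integral_mono (contIntOn (by fun_prop) c d)
            (contIntOn (by fun_prop) c d) (fun z => hpt x y z)
      _ = 6 * ∫ z in Set.Ioo c d, Real.sqrt (f x y z) * Real.sqrt (g x y z) :=
          integral_const_mul 6 _
      _ ≤ _ := by
          have := cs_Ioo (hfxy x y) (hgxy x y) (hf0 x y) (hg0 x y) c d
          nlinarith [this]
  have step2 : ∀ x, (∫ y in Set.Ioo a' b', ∫ z in Set.Ioo c d, |p x y z|)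
      ≤ 6 * (Real.sqrt (∫ y in Set.Ioo a' b', ∫ z in Set.Ioo c d, f x y z)
          * Real.sqrt (∫ y in Set.Ioo a' b', ∫ z in Set.Ioo c d, g x y z)) := by
    intro x
    calc (∫ y in Set.Ioo a' b', ∫ z in Set.Ioo c d, |p x y z|)
        ≤ ∫ y in Set.Ioo a' b',
            6 * (Real.sqrt (∫ z in Set.Ioo c d, f x y z)
              * Real.sqrt (∫ z in Set.Ioo c d, g x y z)) := by
          apply integral_mono
            (contIntOn ((cont_I2 (L := fun x y z => |p x y z|) hpabs c d).comp
              (show Continuous fun y : ℝ => ((x, y) : ℝ × ℝ) by fun_prop)) a' b')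
            (contIntOn (continuous_const.mul
              ((Real.continuous_sqrt.comp (hF2 x)).mul
                (Real.continuous_sqrt.comp (hG2 x)))) a' b') (step1 x)
      _ = 6 * ∫ y in Set.Ioo a' b',
            Real.sqrt (∫ z in Set.Ioo c d, f x y z)
              * Real.sqrt (∫ z in Set.Ioo c d, g x y z) := integral_const_mul 6 _
      _ ≤ _ := by
          have := cs_Ioo (hF2 x) (hG2 x) (hF20 x) (hG20 x) a' b'
          nlinarith [this]
  calc (∫ x in Set.Ioo a b, ∫ y in Set.Ioo a' b', ∫ z in Set.Ioo c d, |p x y z|)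
      ≤ ∫ x in Set.Ioo a b,
          6 * (Real.sqrt (∫ y in Set.Ioo a' b', ∫ z in Set.Ioo c d, f x y z)
            * Real.sqrt (∫ y in Set.Ioo a' b', ∫ z in Set.Ioo c d, g x y z)) := by
        apply integral_mono
          (contIntOn (cont_I1 (L := fun x y z => |p x y z|) hpabs a' b' c d) a b)
          (contIntOn (continuous_const.mul
            ((Real.continuous_sqrt.comp (cont_I1 hf a' b' c d)).mul
              (Real.continuous_sqrt.comp (cont_I1 hg a' b' c d)))) a b) step2
    _ = 6 * ∫ x in Set.Ioo a b,
          Real.sqrt (∫ y in Set.Ioo a' b', ∫ z in Set.Ioo c d, f x y z)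
            * Real.sqrt (∫ y in Set.Ioo a' b', ∫ z in Set.Ioo c d, g x y z) :=
        integral_const_mul 6 _
    _ ≤ _ := by
        have := cs_Ioo (cont_I1 hf a' b' c d) (cont_I1 hg a' b' c d)
          (fun x => integral_nonneg fun y => hF20 x y)
          (fun x => integral_nonneg fun y => hG20 x y) a b
        nlinarith [this]

noncomputable section

/-- Integral over the channel `Ω = (0,1)² × (−h,0)`, written as an iterated integral. -/
def iInt (h : ℝ) (f : ℝ → ℝ → ℝ → ℝ) : ℝ :=
  ∫ x in Set.Ioo (0:ℝ) 1, ∫ y in Set.Ioo (0:ℝ) 1, ∫ z in Set.Ioo (-h) (0:ℝ), f x y z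

/-- Smoothness of a function of three real variables. -/
def Smooth3 (f : ℝ → ℝ → ℝ → ℝ) : Prop :=
  ContDiff ℝ (⊤ : ℕ∞) (fun p : ℝ × ℝ × ℝ => f p.1 p.2.1 p.2.2)

/-- Periodicity in the horizontal variables with period 1. -/
def Per3 (f : ℝ → ℝ → ℝ → ℝ) : Prop :=
  ∀ x y z : ℝ, f (x + 1) y z = f x y z ∧ f x (y + 1) z = f x y z

/-- Horizontal partial derivative in `x`. -/
def dX (f : ℝ → ℝ → ℝ → ℝ) (x y z : ℝ) : ℝ := deriv (fun t => f t y z) x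

/-- Horizontal partial derivative in `y`. -/
def dY (f : ℝ → ℝ → ℝ → ℝ) (x y z : ℝ) : ℝ := deriv (fun t => f x t z) y

/-- Vertical partial derivative in `z`. -/
def dZ (f : ℝ → ℝ → ℝ → ℝ) (x y z : ℝ) : ℝ := deriv (fun t => f x y t) z

/-- `L²(Ω)` norm. -/
def L2n (h : ℝ) (f : ℝ → ℝ → ℝ → ℝ) : ℝ :=
  (iInt h (fun x y z => (f x y z) ^ 2)) ^ ((1:ℝ) / 2)

/-- `L^q(Ω)` norm. -/
def Lqn (h q : ℝ) (f : ℝ → ℝ → ℝ → ℝ) : ℝ :=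
  (iInt h (fun x y z => |f x y z| ^ q)) ^ (1 / q)

/-- On `Ω = (0,1)² × (−h,0)`:
`(∫_M (∫_{−h}^0 |ṽ|⁶ dz)²)^{1/2} ≤ C ‖ṽ‖_{L⁶}³ (∫_Ω |ṽ|⁴|∇_H ṽ|²)^{1/2} + ‖ṽ‖_{L⁶}⁶`. -/
theorem anisotropic_L6_power2 (h : ℝ) (hh : 0 < h) :
    ∃ C > (0:ℝ), ∀ ψ : ℝ → ℝ → ℝ → ℝ, Smooth3 ψ → Per3 ψ →
      (∫ x in Set.Ioo (0:ℝ) 1, ∫ y in Set.Ioo (0:ℝ) 1,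
          (∫ z in Set.Ioo (-h) (0:ℝ), |ψ x y z| ^ 6) ^ 2) ^ ((1:ℝ) / 2) ≤
        C * (Lqn h 6 ψ) ^ 3
            * (iInt h (fun x y z =>
                (ψ x y z) ^ 4 * ((dX ψ x y z) ^ 2 + (dY ψ x y z) ^ 2))) ^ ((1:ℝ) / 2)
          + (Lqn h 6 ψ) ^ 6 := by
  refine ⟨6, by norm_num, ?_⟩
  intro ψ hψ _
  have hu : ContDiff ℝ (⊤ : ℕ∞) (fun p : ℝ × ℝ × ℝ => ψ p.1 p.2.1 p.2.2) := hψ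
  have hcψ : Continuous fun p : ℝ × ℝ × ℝ => ψ p.1 p.2.1 p.2.2 := hu.continuous
  have hud : Differentiable ℝ (fun p : ℝ × ℝ × ℝ => ψ p.1 p.2.1 p.2.2) :=
    hu.differentiable (by simp)
  -- partial derivatives as HasDerivAt
  have hdXa : ∀ x y z : ℝ, HasDerivAt (fun t => ψ t y z)
      (fderiv ℝ (fun p : ℝ × ℝ × ℝ => ψ p.1 p.2.1 p.2.2) (x, y, z) (1, 0, 0)) x := by
    intro x y z
    have he : HasDerivAt (fun t : ℝ => ((t, y, z) : ℝ × ℝ × ℝ)) ((1 : ℝ), (0:ℝ), (0:ℝ)) x :=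
      (hasDerivAt_id x).prodMk (hasDerivAt_const x ((y, z) : ℝ × ℝ))
    exact ((hud (x, y, z)).hasFDerivAt.comp_hasDerivAt x he)
  have hdYa : ∀ x y z : ℝ, HasDerivAt (fun t => ψ x t z)
      (fderiv ℝ (fun p : ℝ × ℝ × ℝ => ψ p.1 p.2.1 p.2.2) (x, y, z) (0, 1, 0)) y := by
    intro x y z
    have he : HasDerivAt (fun t : ℝ => ((x, t, z) : ℝ × ℝ × ℝ)) ((0 : ℝ), (1:ℝ), (0:ℝ)) y :=
      (hasDerivAt_const y x).prodMk ((hasDerivAt_id y).prodMk (hasDerivAt_const y z))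
    exact ((hud (x, y, z)).hasFDerivAt.comp_hasDerivAt y he)
  have hdXeq : ∀ x y z : ℝ, dX ψ x y z
      = fderiv ℝ (fun p : ℝ × ℝ × ℝ => ψ p.1 p.2.1 p.2.2) (x, y, z) (1, 0, 0) :=
    fun x y z => (hdXa x y z).deriv
  have hdYeq : ∀ x y z : ℝ, dY ψ x y z
      = fderiv ℝ (fun p : ℝ × ℝ × ℝ => ψ p.1 p.2.1 p.2.2) (x, y, z) (0, 1, 0) :=
    fun x y z => (hdYa x y z).deriv
  have hcdX : Continuous fun pt : ℝ × ℝ × ℝ => dX ψ pt.1 pt.2.1 pt.2.2 := by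
    have : (fun pt : ℝ × ℝ × ℝ => dX ψ pt.1 pt.2.1 pt.2.2)
        = fun pt : ℝ × ℝ × ℝ =>
          fderiv ℝ (fun p : ℝ × ℝ × ℝ => ψ p.1 p.2.1 p.2.2) pt (1, 0, 0) := by
      funext pt
      rw [hdXeq pt.1 pt.2.1 pt.2.2]
    rw [this]
    exact (hu.continuous_fderiv (by simp)).clm_apply continuous_const
  have hcdY : Continuous fun pt : ℝ × ℝ × ℝ => dY ψ pt.1 pt.2.1 pt.2.2 := by
    have : (fun pt : ℝ × ℝ × ℝ => dY ψ pt.1 pt.2.1 pt.2.2)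
        = fun pt : ℝ × ℝ × ℝ =>
          fderiv ℝ (fun p : ℝ × ℝ × ℝ => ψ p.1 p.2.1 p.2.2) pt (0, 1, 0) := by
      funext pt
      rw [hdYeq pt.1 pt.2.1 pt.2.2]
    rw [this]
    exact (hu.continuous_fderiv (by simp)).clm_apply continuous_const
  -- the basic functions
  have hdXha : ∀ x y z : ℝ, HasDerivAt (fun t => ψ t y z) (dX ψ x y z) x := by
    intro x y z; rw [hdXeq]; exact hdXa x y z
  have hdYha : ∀ x y z : ℝ, HasDerivAt (fun t => ψ x t z) (dY ψ x y z) y := by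
    intro x y z; rw [hdYeq]; exact hdYa x y z
  have hcw : Continuous fun pt : ℝ × ℝ × ℝ => (ψ pt.1 pt.2.1 pt.2.2) ^ 6 := hcψ.pow 6
  have hcpp : Continuous fun pt : ℝ × ℝ × ℝ =>
      6 * (ψ pt.1 pt.2.1 pt.2.2) ^ 5 * dX ψ pt.1 pt.2.1 pt.2.2 :=
    (continuous_const.mul (hcψ.pow 5)).mul hcdX
  have hcqq : Continuous fun pt : ℝ × ℝ × ℝ =>
      6 * (ψ pt.1 pt.2.1 pt.2.2) ^ 5 * dY ψ pt.1 pt.2.1 pt.2.2 :=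
    (continuous_const.mul (hcψ.pow 5)).mul hcdY
  have hcrX : Continuous fun pt : ℝ × ℝ × ℝ =>
      (ψ pt.1 pt.2.1 pt.2.2) ^ 4 * (dX ψ pt.1 pt.2.1 pt.2.2) ^ 2 :=
    (hcψ.pow 4).mul (hcdX.pow 2)
  have hcrY : Continuous fun pt : ℝ × ℝ × ℝ =>
      (ψ pt.1 pt.2.1 pt.2.2) ^ 4 * (dY ψ pt.1 pt.2.1 pt.2.2) ^ 2 :=
    (hcψ.pow 4).mul (hcdY.pow 2)
  have hdw : ∀ y z t : ℝ, HasDerivAt (fun s => (ψ s y z) ^ 6)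
      (6 * (ψ t y z) ^ 5 * dX ψ t y z) t := by
    intro y z t
    have := (hdXha t y z).pow 6
    norm_num at this
    exact this
  have hdw' : ∀ x z t : ℝ, HasDerivAt (fun s => (ψ x s z) ^ 6)
      (6 * (ψ x t z) ^ 5 * dY ψ x t z) t := by
    intro x z t
    have := (hdYha x t z).pow 6
    norm_num at this
    exact this
  -- goal massaging
  have habs6 : ∀ a : ℝ, |a| ^ (6:ℕ) = a ^ 6 := fun a => by
    rw [← abs_pow]; exact abs_of_nonneg (by positivity)
  have hrpow6 : ∀ a : ℝ, |a| ^ (6:ℝ) = a ^ (6:ℕ) := fun a => by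
    rw [show (6:ℝ) = ((6:ℕ):ℝ) by norm_num, Real.rpow_natCast, habs6]
  simp only [Lqn, iInt, hrpow6, habs6]
  set P : ℝ := ∫ x in Set.Ioo (0:ℝ) 1, ∫ y in Set.Ioo (0:ℝ) 1,
      ∫ z in Set.Ioo (-h) (0:ℝ), (ψ x y z) ^ 6 with hPdef
  set BB : ℝ := ∫ x in Set.Ioo (0:ℝ) 1, ∫ y in Set.Ioo (0:ℝ) 1,
      ∫ z in Set.Ioo (-h) (0:ℝ),
        (ψ x y z) ^ 4 * ((dX ψ x y z) ^ 2 + (dY ψ x y z) ^ 2) with hBBdef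
  set S : ℝ := ∫ x in Set.Ioo (0:ℝ) 1, ∫ y in Set.Ioo (0:ℝ) 1,
      (∫ z in Set.Ioo (-h) (0:ℝ), (ψ x y z) ^ 6) ^ 2 with hSdef
  have hP0 : 0 ≤ P := I0_nonneg (fun x y z => by positivity) 0 1 0 1 (-h) 0
  have hBB0 : 0 ≤ BB := I0_nonneg (fun x y z => by positivity) 0 1 0 1 (-h) 0
  have e1 : (P ^ (1/(6:ℝ))) ^ (3:ℕ) = Real.sqrt P := by
    rw [← Real.rpow_natCast (P ^ (1/(6:ℝ))) 3, ← Real.rpow_mul hP0, Real.sqrt_eq_rpow]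
    norm_num
  have e2 : (P ^ (1/(6:ℝ))) ^ (6:ℕ) = P := by
    rw [← Real.rpow_natCast (P ^ (1/(6:ℝ))) 6, ← Real.rpow_mul hP0]
    norm_num
  rw [e1, e2, ← Real.sqrt_eq_rpow, ← Real.sqrt_eq_rpow]
  -- quantities
  set Qp : ℝ := ∫ x in Set.Ioo (0:ℝ) 1, ∫ y in Set.Ioo (0:ℝ) 1,
      ∫ z in Set.Ioo (-h) (0:ℝ), |6 * (ψ x y z) ^ 5 * dX ψ x y z| with hQpdef
  set Qq : ℝ := ∫ x in Set.Ioo (0:ℝ) 1, ∫ y in Set.Ioo (0:ℝ) 1,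
      ∫ z in Set.Ioo (-h) (0:ℝ), |6 * (ψ x y z) ^ 5 * dY ψ x y z| with hQqdef
  set BX : ℝ := ∫ x in Set.Ioo (0:ℝ) 1, ∫ y in Set.Ioo (0:ℝ) 1,
      ∫ z in Set.Ioo (-h) (0:ℝ), (ψ x y z) ^ 4 * (dX ψ x y z) ^ 2 with hBXdef
  set BY : ℝ := ∫ x in Set.Ioo (0:ℝ) 1, ∫ y in Set.Ioo (0:ℝ) 1,
      ∫ z in Set.Ioo (-h) (0:ℝ), (ψ x y z) ^ 4 * (dY ψ x y z) ^ 2 with hBYdef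
  have hQp0 : 0 ≤ Qp := I0_nonneg (fun x y z => abs_nonneg _) 0 1 0 1 (-h) 0
  have hQq0 : 0 ≤ Qq := I0_nonneg (fun x y z => abs_nonneg _) 0 1 0 1 (-h) 0
  -- the two one-dimensional claims
  have claimX : ∀ x ∈ Set.Ioo (0:ℝ) 1, ∀ y : ℝ,
      (∫ z in Set.Ioo (-h) (0:ℝ), (ψ x y z) ^ 6)
        ≤ (∫ s in Set.Ioo (0:ℝ) 1, ∫ z in Set.Ioo (-h) (0:ℝ), (ψ s y z) ^ 6)
          + ∫ z in Set.Ioo (-h) (0:ℝ), ∫ t in Set.Ioo (0:ℝ) 1,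
              |6 * (ψ t y z) ^ 5 * dX ψ t y z| := fun x hx y =>
    claim1 (w := fun a b c => (ψ a b c) ^ 6)
      (p := fun a b c => 6 * (ψ a b c) ^ 5 * dX ψ a b c) hcw hcpp
      (fun y z t => hdw y z t) (-h) 0 hx y
  have claimY : ∀ y ∈ Set.Ioo (0:ℝ) 1, ∀ x : ℝ,
      (∫ z in Set.Ioo (-h) (0:ℝ), (ψ x y z) ^ 6)
        ≤ (∫ s in Set.Ioo (0:ℝ) 1, ∫ z in Set.Ioo (-h) (0:ℝ), (ψ x s z) ^ 6)
          + ∫ z in Set.Ioo (-h) (0:ℝ), ∫ t in Set.Ioo (0:ℝ) 1,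
              |6 * (ψ x t z) ^ 5 * dY ψ x t z| := fun y hy x =>
    claim1 (w := fun a b c => (ψ b a c) ^ 6)
      (p := fun a b c => 6 * (ψ b a c) ^ 5 * dY ψ b a c)
      (hcw.comp (show Continuous fun pt : ℝ × ℝ × ℝ =>
        ((pt.2.1, pt.1, pt.2.2) : ℝ × ℝ × ℝ) by fun_prop))
      (hcqq.comp (show Continuous fun pt : ℝ × ℝ × ℝ =>
        ((pt.2.1, pt.1, pt.2.2) : ℝ × ℝ × ℝ) by fun_prop))
      (fun x z t => hdw' x z t) (-h) 0 hy x
  -- auxiliary functions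
  set DP : ℝ → ℝ := fun y => ∫ z in Set.Ioo (-h) (0:ℝ), ∫ t in Set.Ioo (0:ℝ) 1,
      |6 * (ψ t y z) ^ 5 * dX ψ t y z| with hDPdef
  set DQ : ℝ → ℝ := fun x => ∫ z in Set.Ioo (-h) (0:ℝ), ∫ t in Set.Ioo (0:ℝ) 1,
      |6 * (ψ x t z) ^ 5 * dY ψ x t z| with hDQdef
  set F1 : ℝ → ℝ := fun y =>
      (∫ s in Set.Ioo (0:ℝ) 1, ∫ z in Set.Ioo (-h) (0:ℝ), (ψ s y z) ^ 6) + DP y with hF1def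
  set B2 : ℝ → ℝ := fun x =>
      (∫ t in Set.Ioo (0:ℝ) 1, ∫ z in Set.Ioo (-h) (0:ℝ), (ψ x t z) ^ 6) + DQ x with hB2def
  -- continuity facts
  have habsp : Continuous fun pt : ℝ × ℝ × ℝ =>
      |6 * (ψ pt.1 pt.2.1 pt.2.2) ^ 5 * dX ψ pt.1 pt.2.1 pt.2.2| := hcpp.abs
  have habsq : Continuous fun pt : ℝ × ℝ × ℝ =>
      |6 * (ψ pt.1 pt.2.1 pt.2.2) ^ 5 * dY ψ pt.1 pt.2.1 pt.2.2| := hcqq.abs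
  have hInp : Continuous fun yz : ℝ × ℝ => ∫ t in Set.Ioo (0:ℝ) 1,
      |6 * (ψ t yz.1 yz.2) ^ 5 * dX ψ t yz.1 yz.2| :=
    contParam (k := fun (yz : ℝ × ℝ) t => |6 * (ψ t yz.1 yz.2) ^ 5 * dX ψ t yz.1 yz.2|)
      (habsp.comp (show Continuous fun pr : (ℝ × ℝ) × ℝ =>
        ((pr.2, pr.1.1, pr.1.2) : ℝ × ℝ × ℝ) by fun_prop)) 0 1
  have hInq : Continuous fun xz : ℝ × ℝ => ∫ t in Set.Ioo (0:ℝ) 1,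
      |6 * (ψ xz.1 t xz.2) ^ 5 * dY ψ xz.1 t xz.2| :=
    contParam (k := fun (xz : ℝ × ℝ) t => |6 * (ψ xz.1 t xz.2) ^ 5 * dY ψ xz.1 t xz.2|)
      (habsq.comp (show Continuous fun pr : (ℝ × ℝ) × ℝ =>
        ((pr.1.1, pr.2, pr.1.2) : ℝ × ℝ × ℝ) by fun_prop)) 0 1
  have hDP : Continuous DP :=
    contParam (k := fun y z => ∫ t in Set.Ioo (0:ℝ) 1,
      |6 * (ψ t y z) ^ 5 * dX ψ t y z|) hInp (-h) 0
  have hDQ : Continuous DQ :=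
    contParam (k := fun x z => ∫ t in Set.Ioo (0:ℝ) 1,
      |6 * (ψ x t z) ^ 5 * dY ψ x t z|) hInq (-h) 0
  have hgc2 : Continuous fun xy : ℝ × ℝ => ∫ z in Set.Ioo (-h) (0:ℝ),
      (ψ xy.1 xy.2 z) ^ 6 :=
    cont_I2 (L := fun a b c => (ψ a b c) ^ 6) hcw (-h) 0
  have hF1c : Continuous F1 :=
    (contParam (k := fun y s => ∫ z in Set.Ioo (-h) (0:ℝ), (ψ s y z) ^ 6)
      (hgc2.comp (show Continuous fun p : ℝ × ℝ => ((p.2, p.1) : ℝ × ℝ) by fun_prop)) 0 1).add hDP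
  have hB2c : Continuous B2 :=
    (contParam (k := fun x t => ∫ z in Set.Ioo (-h) (0:ℝ), (ψ x t z) ^ 6) hgc2 0 1).add hDQ
  -- nonnegativity
  have hg0 : ∀ x y : ℝ, 0 ≤ ∫ z in Set.Ioo (-h) (0:ℝ), (ψ x y z) ^ 6 :=
    fun x y => integral_nonneg fun z => by positivity
  have hDP0 : ∀ y, 0 ≤ DP y :=
    fun y => integral_nonneg fun z => integral_nonneg fun t => abs_nonneg _
  have hDQ0 : ∀ x, 0 ≤ DQ x :=
    fun x => integral_nonneg fun z => integral_nonneg fun t => abs_nonneg _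
  have hF10 : ∀ y, 0 ≤ F1 y := fun y =>
    add_nonneg (integral_nonneg fun s => hg0 s y) (hDP0 y)
  have hB20 : ∀ x, 0 ≤ B2 x := fun x =>
    add_nonneg (integral_nonneg fun t => hg0 x t) (hDQ0 x)
  -- main product bound
  have hSbound : S ≤ (∫ x in Set.Ioo (0:ℝ) 1, B2 x) * (∫ y in Set.Ioo (0:ℝ) 1, F1 y) := by
    rw [hSdef]
    calc (∫ x in Set.Ioo (0:ℝ) 1, ∫ y in Set.Ioo (0:ℝ) 1,
            (∫ z in Set.Ioo (-h) (0:ℝ), (ψ x y z) ^ 6) ^ 2)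
        ≤ ∫ x in Set.Ioo (0:ℝ) 1, (B2 x * ∫ y in Set.Ioo (0:ℝ) 1, F1 y) := by
          apply setIntegral_mono_on
          · exact contIntOn (contParam (k := fun x y =>
              (∫ z in Set.Ioo (-h) (0:ℝ), (ψ x y z) ^ 6) ^ 2) (hgc2.pow 2) 0 1) 0 1
          · exact contIntOn (hB2c.mul continuous_const) 0 1
          · exact measurableSet_Ioo
          intro x hx
          calc (∫ y in Set.Ioo (0:ℝ) 1, (∫ z in Set.Ioo (-h) (0:ℝ), (ψ x y z) ^ 6) ^ 2)
              ≤ ∫ y in Set.Ioo (0:ℝ) 1, B2 x * F1 y := by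
                apply setIntegral_mono_on
                · exact contIntOn (((hgc2.comp (show Continuous fun y : ℝ =>
                    ((x, y) : ℝ × ℝ) by fun_prop)).pow 2)) 0 1
                · exact contIntOn (continuous_const.mul hF1c) 0 1
                · exact measurableSet_Ioo
                intro y hy
                have h1 := claimY y hy x
                have h2 := claimX x hx y
                have h3 : (∫ z in Set.Ioo (-h) (0:ℝ), (ψ x y z) ^ 6) ^ 2
                    = (∫ z in Set.Ioo (-h) (0:ℝ), (ψ x y z) ^ 6)
                      * (∫ z in Set.Ioo (-h) (0:ℝ), (ψ x y z) ^ 6) := sq _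
                rw [h3]
                exact mul_le_mul h1 h2 (hg0 x y) (hB20 x)
            _ = B2 x * ∫ y in Set.Ioo (0:ℝ) 1, F1 y := integral_const_mul _ _
      _ = (∫ x in Set.Ioo (0:ℝ) 1, B2 x) * (∫ y in Set.Ioo (0:ℝ) 1, F1 y) :=
          integral_mul_const _ _
  -- evaluating the two factors
  have hB2int : (∫ x in Set.Ioo (0:ℝ) 1, B2 x) = P + Qq := by
    rw [hB2def]
    rw [integral_add (contIntOn (contParam (k := fun x t =>
        ∫ z in Set.Ioo (-h) (0:ℝ), (ψ x t z) ^ 6) hgc2 0 1) 0 1) (contIntOn hDQ 0 1)]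
    congr 1
    have hsw : ∀ x : ℝ, DQ x
        = ∫ t in Set.Ioo (0:ℝ) 1, ∫ z in Set.Ioo (-h) (0:ℝ),
            |6 * (ψ x t z) ^ 5 * dY ψ x t z| := by
      intro x
      exact swap2 (m := fun z t => |6 * (ψ x t z) ^ 5 * dY ψ x t z|)
        (habsq.comp (show Continuous fun pr : ℝ × ℝ =>
          ((x, pr.2, pr.1) : ℝ × ℝ × ℝ) by fun_prop)) (-h) 0 0 1
    rw [integral_congr_ae (Filter.Eventually.of_forall hsw)]
  have hF1int : (∫ y in Set.Ioo (0:ℝ) 1, F1 y) = P + Qp := by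
    rw [hF1def]
    rw [integral_add (contIntOn (contParam (k := fun y s =>
        ∫ z in Set.Ioo (-h) (0:ℝ), (ψ s y z) ^ 6)
        (hgc2.comp (show Continuous fun p : ℝ × ℝ => ((p.2, p.1) : ℝ × ℝ) by fun_prop))
        0 1) 0 1) (contIntOn hDP 0 1)]
    congr 1
    · exact (swap_xy (L := fun a b c => (ψ a b c) ^ 6) hcw 0 1 0 1 (-h) 0).symm
    · have hsw : ∀ y : ℝ, DP y
          = ∫ t in Set.Ioo (0:ℝ) 1, ∫ z in Set.Ioo (-h) (0:ℝ),
              |6 * (ψ t y z) ^ 5 * dX ψ t y z| := by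
        intro y
        exact swap2 (m := fun z t => |6 * (ψ t y z) ^ 5 * dX ψ t y z|)
          (habsp.comp (show Continuous fun pr : ℝ × ℝ =>
            ((pr.2, y, pr.1) : ℝ × ℝ × ℝ) by fun_prop)) (-h) 0 0 1
      rw [integral_congr_ae (Filter.Eventually.of_forall hsw)]
      exact (swap_xy (L := fun a b c => |6 * (ψ a b c) ^ 5 * dX ψ a b c|)
        habsp 0 1 0 1 (-h) 0).symm
  -- Cauchy-Schwarz bounds
  have hptX : ∀ x y z : ℝ, |6 * (ψ x y z) ^ 5 * dX ψ x y z|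
      ≤ 6 * (Real.sqrt ((ψ x y z) ^ 6)
          * Real.sqrt ((ψ x y z) ^ 4 * (dX ψ x y z) ^ 2)) := by
    intro x y z
    apply le_of_eq
    have e1 : Real.sqrt ((ψ x y z) ^ 6) = |ψ x y z| ^ 3 := by
      rw [show (ψ x y z) ^ 6 = ((ψ x y z) ^ 3) ^ 2 by ring, Real.sqrt_sq_eq_abs, abs_pow]
    have e2 : Real.sqrt ((ψ x y z) ^ 4 * (dX ψ x y z) ^ 2)
        = |ψ x y z| ^ 2 * |dX ψ x y z| := by
      rw [show (ψ x y z) ^ 4 * (dX ψ x y z) ^ 2 = ((ψ x y z) ^ 2 * dX ψ x y z) ^ 2 by ring,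
        Real.sqrt_sq_eq_abs, abs_mul, abs_pow]
    rw [e1, e2, abs_mul, abs_mul, abs_pow]
    norm_num
    rw [← sq_abs (ψ x y z)]
    ring
  have hptY : ∀ x y z : ℝ, |6 * (ψ x y z) ^ 5 * dY ψ x y z|
      ≤ 6 * (Real.sqrt ((ψ x y z) ^ 6)
          * Real.sqrt ((ψ x y z) ^ 4 * (dY ψ x y z) ^ 2)) := by
    intro x y z
    apply le_of_eq
    have e1 : Real.sqrt ((ψ x y z) ^ 6) = |ψ x y z| ^ 3 := by
      rw [show (ψ x y z) ^ 6 = ((ψ x y z) ^ 3) ^ 2 by ring, Real.sqrt_sq_eq_abs, abs_pow]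
    have e2 : Real.sqrt ((ψ x y z) ^ 4 * (dY ψ x y z) ^ 2)
        = |ψ x y z| ^ 2 * |dY ψ x y z| := by
      rw [show (ψ x y z) ^ 4 * (dY ψ x y z) ^ 2 = ((ψ x y z) ^ 2 * dY ψ x y z) ^ 2 by ring,
        Real.sqrt_sq_eq_abs, abs_mul, abs_pow]
    rw [e1, e2, abs_mul, abs_mul, abs_pow]
    norm_num
    rw [← sq_abs (ψ x y z)]
    ring
  have hCSp : Qp ≤ 6 * (Real.sqrt P * Real.sqrt BX) := by
    rw [hQpdef, hPdef, hBXdef]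
    exact cs_chain hcpp hcw hcrX (fun x y z => by positivity) (fun x y z => by positivity)
      hptX 0 1 0 1 (-h) 0
  have hCSq : Qq ≤ 6 * (Real.sqrt P * Real.sqrt BY) := by
    rw [hQqdef, hPdef, hBYdef]
    exact cs_chain hcqq hcw hcrY (fun x y z => by positivity) (fun x y z => by positivity)
      hptY 0 1 0 1 (-h) 0
  have hBXle : Real.sqrt BX ≤ Real.sqrt BB := by
    apply Real.sqrt_le_sqrt
    rw [hBXdef, hBBdef]
    exact I0_mono hcrX ((hcψ.pow 4).mul ((hcdX.pow 2).add (hcdY.pow 2)))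
      (fun x y z => by nlinarith [sq_nonneg (ψ x y z ^ 2 * dY ψ x y z)]) 0 1 0 1 (-h) 0
  have hBYle : Real.sqrt BY ≤ Real.sqrt BB := by
    apply Real.sqrt_le_sqrt
    rw [hBYdef, hBBdef]
    exact I0_mono hcrY ((hcψ.pow 4).mul ((hcdX.pow 2).add (hcdY.pow 2)))
      (fun x y z => by nlinarith [sq_nonneg (ψ x y z ^ 2 * dX ψ x y z)]) 0 1 0 1 (-h) 0
  have hsP : 0 ≤ Real.sqrt P := Real.sqrt_nonneg _
  have hQple : Qp ≤ 6 * (Real.sqrt P * Real.sqrt BB) := by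
    exact hCSp.trans (mul_le_mul_of_nonneg_left
      (mul_le_mul_of_nonneg_left hBXle hsP) (by norm_num))
  have hQqle : Qq ≤ 6 * (Real.sqrt P * Real.sqrt BB) := by
    exact hCSq.trans (mul_le_mul_of_nonneg_left
      (mul_le_mul_of_nonneg_left hBYle hsP) (by norm_num))
  clear_value P BB S Qp Qq BX BY
  -- conclusion
  have hfin : Real.sqrt S ≤ P + (Qq + Qp) / 2 := by
    have h1 : Real.sqrt S ≤ Real.sqrt ((P + Qq) * (P + Qp)) := by
      apply Real.sqrt_le_sqrt
      rw [← hB2int, ← hF1int]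
      exact hSbound
    have h2 : Real.sqrt ((P + Qq) * (P + Qp))
        = Real.sqrt (P + Qq) * Real.sqrt (P + Qp) :=
      Real.sqrt_mul (by linarith) _
    have h3 : Real.sqrt (P + Qq) * Real.sqrt (P + Qp) ≤ ((P + Qq) + (P + Qp)) / 2 :=
      sqrt_mul_le_add (by linarith) (by linarith)
    calc Real.sqrt S ≤ Real.sqrt (P + Qq) * Real.sqrt (P + Qp) := h2 ▸ h1
      _ ≤ ((P + Qq) + (P + Qp)) / 2 := h3
      _ = P + (Qq + Qp) / 2 := by ring
  calc Real.sqrt S ≤ P + (Qq + Qp) / 2 := hfin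
    _ ≤ P + 6 * (Real.sqrt P * Real.sqrt BB) := by linarith
    _ = 6 * Real.sqrt P * Real.sqrt BB + P := by ring
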